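/- Discrete Euler-Lagrange equation: let L : ℝ × ℝ × ℝ → ℝ, written L(t, x, v), be continuously differentiable, and denote by ∂L/∂x and ∂L/∂v its partial derivatives in the second and third arguments. For a discrete function X : {0, …, N} → ℝ define the discrete action 𝓛_Δ(X) = h · Σ_{k=0}^{N−1} L(t_k, X_k, (ΔX)_k). Then X is a discrete critical point — i.e. for every discrete variation H : {0, …, N} → ℝ with H_0 = H_N = 0, the function ε ↦ 𝓛_Δ(X + ε·H) has derivative 0 at ε = 0 — if and only if X satisfies the discrete Euler-Lagrange equation: for every k = 1, …, N−1, ( ∂L/∂v(t_k, X_k, (ΔX)_k) − ∂L/∂v(t_{k−1}, X_{k−1}, (ΔX)_{k−1}) ) / h = ∂L/∂x(t_k, X_k, (ΔX)_k). -/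

import Mathlib

lemma key13 (L Lx Lv : ℝ → ℝ → ℝ → ℝ)
    (hL : ContDiff ℝ 1 (fun p : ℝ × ℝ × ℝ => L p.1 p.2.1 p.2.2))
    (hLx : ∀ s x v, HasDerivAt (fun y => L s y v) (Lx s x v) x)
    (hLv : ∀ s x v, HasDerivAt (fun w => L s x w) (Lv s x v) v)
    (s x v H W : ℝ) :
    HasDerivAt (fun ε : ℝ => L s (x + ε * H) (v + ε * W))
      (Lx s x v * H + Lv s x v * W) 0 := by
  set g : ℝ × ℝ × ℝ → ℝ := fun p => L p.1 p.2.1 p.2.2 with hg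
  have hdg : DifferentiableAt ℝ g (s, x, v) := (hL.differentiable one_ne_zero).differentiableAt
  set f := fderiv ℝ g (s, x, v) with hf
  -- partial derivatives
  have line2 : HasDerivAt (fun y : ℝ => ((s, y, v) : ℝ × ℝ × ℝ)) ((0, 1, 0) : ℝ × ℝ × ℝ) x := by
    exact (hasDerivAt_const x s).prodMk ((hasDerivAt_id x).prodMk (hasDerivAt_const x v))
  have line3 : HasDerivAt (fun w : ℝ => ((s, x, w) : ℝ × ℝ × ℝ)) ((0, 0, 1) : ℝ × ℝ × ℝ) v := by
    exact (hasDerivAt_const v s).prodMk ((hasDerivAt_const v x).prodMk (hasDerivAt_id v))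
  have e1 : f (0, 1, 0) = Lx s x v := by
    have := hdg.hasFDerivAt.comp_hasDerivAt x line2
    exact this.unique (hLx s x v)
  have e2 : f (0, 0, 1) = Lv s x v := by
    have := hdg.hasFDerivAt.comp_hasDerivAt v line3
    exact this.unique (hLv s x v)
  have hγ : HasDerivAt (fun ε : ℝ => ((s, x + ε * H, v + ε * W) : ℝ × ℝ × ℝ))
      ((0, H, W) : ℝ × ℝ × ℝ) 0 := by
    have h2 : HasDerivAt (fun ε : ℝ => x + ε * H) H 0 := by
      simpa using ((hasDerivAt_id (0:ℝ)).mul_const H).const_add x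
    have h3 : HasDerivAt (fun ε : ℝ => v + ε * W) W 0 := by
      simpa using ((hasDerivAt_id (0:ℝ)).mul_const W).const_add v
    exact (hasDerivAt_const (0:ℝ) s).prodMk (h2.prodMk h3)
  have hdg' : HasFDerivAt g f (s, x + 0 * H, v + 0 * W) := by
    simpa using hdg.hasFDerivAt
  have hcomp := hdg'.comp_hasDerivAt 0 hγ
  have hval : f ((0, H, W) : ℝ × ℝ × ℝ) = Lx s x v * H + Lv s x v * W := by
    have : ((0, H, W) : ℝ × ℝ × ℝ) = H • ((0,1,0) : ℝ × ℝ × ℝ) + W • ((0,0,1) : ℝ × ℝ × ℝ) := by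
      simp [Prod.ext_iff]
    rw [this, map_add, map_smul, map_smul, e1, e2, smul_eq_mul, smul_eq_mul]
    ring
  rw [hval] at hcomp
  exact hcomp

/-- Discrete Euler–Lagrange equation: for a `C¹` Lagrangian
`L(t, x, v)` with partial derivatives `Lx = ∂L/∂x` and `Lv = ∂L/∂v`, a discrete
function `X` is a critical point of the discrete action
`𝓛_Δ(X) = h · Σ_{k=0}^{N−1} L(t_k, X_k, (ΔX)_k)` (i.e. for every discrete
variation `H` with `H_0 = H_N = 0`, the map `ε ↦ 𝓛_Δ(X + εH)` has derivative `0`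
at `ε = 0`) if and only if `X` satisfies the discrete Euler–Lagrange equation
`∇(Lv(t, X, ΔX))_k = Lx(t_k, X_k, (ΔX)_k)` for `k = 1, …, N−1`. -/
theorem stmt13 (a b : ℝ) (hab : a < b) (N : ℕ) (hN : 2 ≤ N)
    (h : ℝ) (hh : h = (b - a) / N)
    (t : ℕ → ℝ) (ht : ∀ k, t k = a + k * h)
    (L Lx Lv : ℝ → ℝ → ℝ → ℝ)
    (hL : ContDiff ℝ 1 (fun p : ℝ × ℝ × ℝ => L p.1 p.2.1 p.2.2))
    (hLx : ∀ s x v, HasDerivAt (fun y => L s y v) (Lx s x v) x)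
    (hLv : ∀ s x v, HasDerivAt (fun w => L s x w) (Lv s x v) v)
    (X : ℕ → ℝ) :
    (∀ H : ℕ → ℝ, H 0 = 0 → H N = 0 →
      HasDerivAt
        (fun ε : ℝ => h * ∑ k ∈ Finset.range N,
          L (t k) (X k + ε * H k)
            ((X (k + 1) + ε * H (k + 1) - (X k + ε * H k)) / h))
        0 0) ↔
    (∀ k, 1 ≤ k → k ≤ N - 1 →
      (Lv (t k) (X k) ((X (k + 1) - X k) / h)
        - Lv (t (k - 1)) (X (k - 1)) ((X k - X (k - 1)) / h)) / h
      = Lx (t k) (X k) ((X (k + 1) - X k) / h)) := by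
  have hNpos : (0:ℝ) < N := by
    have : 0 < N := by omega
    exact_mod_cast this
  have hhpos : 0 < h := by rw [hh]; exact div_pos (by linarith) hNpos
  have hne : h ≠ 0 := ne_of_gt hhpos
  -- abbreviations
  set A : ℕ → ℝ := fun j => Lv (t j) (X j) ((X (j + 1) - X j) / h) with hA
  set B : ℕ → ℝ := fun j => Lx (t j) (X j) ((X (j + 1) - X j) / h) with hB
  -- derivative of the action for an arbitrary variation
  have hD : ∀ H : ℕ → ℝ,
      HasDerivAt
        (fun ε : ℝ => h * ∑ k ∈ Finset.range N,
          L (t k) (X k + ε * H k)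
            ((X (k + 1) + ε * H (k + 1) - (X k + ε * H k)) / h))
        (h * ∑ k ∈ Finset.range N,
          (B k * H k + A k * ((H (k + 1) - H k) / h))) 0 := by
    intro H
    have hfun : (fun ε : ℝ => h * ∑ k ∈ Finset.range N,
          L (t k) (X k + ε * H k)
            ((X (k + 1) + ε * H (k + 1) - (X k + ε * H k)) / h))
        = (fun ε : ℝ => h * ∑ k ∈ Finset.range N,
          L (t k) (X k + ε * H k)
            ((X (k + 1) - X k) / h + ε * ((H (k + 1) - H k) / h))) := by
      funext ε
      congr 1
      refine Finset.sum_congr rfl fun k _ => ?_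
      congr 1
      ring
    rw [hfun]
    refine HasDerivAt.const_mul h ?_
    refine HasDerivAt.fun_sum fun k _ => ?_
    exact key13 L Lx Lv hL hLx hLv (t k) (X k) ((X (k + 1) - X k) / h)
      (H k) ((H (k + 1) - H k) / h)
  constructor
  · intro crit k hk1 hk2
    have hkN : k < N := by omega
    set H : ℕ → ℝ := fun j => if j = k then (1:ℝ) else 0 with hHdef
    have hH0 : H 0 = 0 := by simp [hHdef]; omega
    have hHN : H N = 0 := by simp [hHdef]; omega
    have h1 := crit H hH0 hHN
    have h2 := hD H
    have hsum0 : h * ∑ j ∈ Finset.range N,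
        (B j * H j + A j * ((H (j + 1) - H j) / h)) = 0 := h2.unique h1
    have hsub : ({k - 1, k} : Finset ℕ) ⊆ Finset.range N := by
      intro j hj
      simp only [Finset.mem_insert, Finset.mem_singleton] at hj
      simp only [Finset.mem_range]
      omega
    have hzero : ∀ j ∈ Finset.range N, j ∉ ({k - 1, k} : Finset ℕ) →
        B j * H j + A j * ((H (j + 1) - H j) / h) = 0 := by
      intro j _ hj
      simp only [Finset.mem_insert, Finset.mem_singleton, not_or] at hj
      have e1 : H j = 0 := by simp [hHdef]; omega
      have e2 : H (j + 1) = 0 := by simp [hHdef]; omega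
      simp [e1, e2]
    rw [← Finset.sum_subset hsub hzero] at hsum0
    have hne' : k - 1 ≠ k := by omega
    rw [Finset.sum_pair hne'] at hsum0
    have eH1 : H (k - 1) = 0 := by simp [hHdef]; omega
    have eH2 : H (k - 1 + 1) = 1 := by simp [hHdef]; omega
    have eH3 : H k = 1 := by simp [hHdef]
    have eH4 : H (k + 1) = 0 := by simp [hHdef]
    rw [eH1, eH2, eH3, eH4] at hsum0
    have hk1' : k - 1 + 1 = k := by omega
    have hAk1 : A (k - 1) = Lv (t (k - 1)) (X (k - 1)) ((X k - X (k - 1)) / h) := by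
      simp only [hA]; rw [hk1']
    have hgoal : (A k - A (k - 1)) / h = B k := by
      field_simp at hsum0 ⊢
      linarith
    rw [hAk1] at hgoal
    exact hgoal
  · intro hEL H hH0 hHN
    have h2 := hD H
    have hsum0 : h * ∑ j ∈ Finset.range N,
        (B j * H j + A j * ((H (j + 1) - H j) / h)) = 0 := by
      have hsplit : ∀ j, B j * H j + A j * ((H (j + 1) - H j) / h)
          = (B j - (A j - A (j - 1)) / h) * H j
            + (A j * H (j + 1) - A (j - 1) * H j) / h := by
        intro j
        cases j with
        | zero => simp; ring
        | succ n => field_simp; ring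
      rw [Finset.sum_congr rfl fun j _ => hsplit j, Finset.sum_add_distrib]
      have hT : ∑ j ∈ Finset.range N, (A j * H (j + 1) - A (j - 1) * H j) / h
          = (A (N - 1) * H N - A (0 - 1) * H 0) / h := by
        rw [← Finset.sum_div]
        congr 1
        have := Finset.sum_range_sub (f := fun j => A (j - 1) * H j) N
        simpa using this
      rw [hT, hH0, hHN]
      have hz : ∀ j ∈ Finset.range N, (B j - (A j - A (j - 1)) / h) * H j = 0 := by
        intro j hj
        rcases Nat.eq_zero_or_pos j with h0 | h0
        · rw [h0, hH0, mul_zero]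
        · have hjN : j < N := Finset.mem_range.mp hj
          have := hEL j h0 (by omega)
          have hj1 : j - 1 + 1 = j := by omega
          have hA' : Lv (t (j - 1)) (X (j - 1)) ((X j - X (j - 1)) / h) = A (j - 1) := by
            simp only [hA, hj1]
          rw [hA'] at this
          have : B j - (A j - A (j - 1)) / h = 0 := by
            simp only [hB]
            rw [← this]; ring
          rw [this, zero_mul]
      rw [Finset.sum_eq_zero hz]
      simp
    rwa [hsum0] at h2
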